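/- arXiv:1601.08221 — 5 statements merged into one kernel-verified Lean document; each statement's English description precedes it below -/
import Mathlib

section
/- For a monotonically increasing performance goal, the heuristic h(v) = Σ_{q ∈ v_u} min_i (f^i_r · l(q, i)) never overestimates the true remaining cost: for any path from vertex v to a goal vertex g in the scheduling graph, the sum of edge weights along the path is at least h(v). -/
/-- Edges of a scheduling graph: start-up of a VM of some type, or placement
of a query on a VM of some type. -/
inductive SEdge (Query VMType : Type) where
  | startup (i : VMType)
  | place (q : Query) (i : VMType)
  deriving DecidableEq

/-- For a monotonically increasing performance goal, the heuristic
`h(v) = Σ_{q ∈ v_u} min_i (f^i_r · l(q,i))` never overestimates the true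
remaining cost: the total weight of any path from `v` to a goal vertex
(encoded as its list of edges, which contains exactly one placement edge for
each unassigned query of `v`) is at least `h(v)`. -/
theorem stmt0 {Query VMType : Type} [DecidableEq Query] [DecidableEq VMType]
    [Fintype VMType] [Nonempty VMType]
    (f_s f_r : VMType → ℝ) (l : Query → VMType → ℝ)
    (hfs : ∀ i, 0 ≤ f_s i) (hfr : ∀ i, 0 ≤ f_r i) (hl : ∀ q i, 0 ≤ l q i)
    (vu : Finset Query)
    (edges : List (SEdge Query VMType))
    (penaltyDiff : SEdge Query VMType → ℝ)
    -- monotonically increasing performance goal: penalties never decrease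
    (hmono : ∀ e, 0 ≤ penaltyDiff e)
    -- start-up edges do not change the penalty
    (hstartup : ∀ i, penaltyDiff (SEdge.startup i) = 0)
    -- the path contains exactly one placement edge for each query in `v_u`
    (hplace : ∀ q ∈ vu, (edges.filter (fun e => match e with
        | SEdge.place q' _ => q' == q
        | _ => false)).length = 1) :
    ∑ q ∈ vu, (Finset.univ.inf' Finset.univ_nonempty (fun i => f_r i * l q i))
      ≤ (edges.map (fun e => (match e with
          | SEdge.startup i => f_s i
          | SEdge.place q i => l q i * f_r i) + penaltyDiff e)).sum := by
  induction edges generalizing vu with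
  | nil =>
    have hvu : vu = ∅ := by
      by_contra h
      obtain ⟨q, hq⟩ := Finset.nonempty_iff_ne_empty.mpr h
      have := hplace q hq
      simp at this
    simp [hvu]
  | cons e es ih =>
    cases e with
    | startup i =>
      have h1 : ∀ q ∈ vu, (es.filter (fun e => match e with
          | SEdge.place q' _ => q' == q
          | _ => false)).length = 1 := by
        intro q hq
        have := hplace q hq
        rw [List.filter_cons] at this
        simpa using this
      have hih := ih vu h1
      simp only [List.map_cons, List.sum_cons]
      have h2 : (0:ℝ) ≤ f_s i + penaltyDiff (SEdge.startup i) := by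
        rw [hstartup]; simpa using hfs i
      linarith
    | place q0 i =>
      by_cases hq0 : q0 ∈ vu
      · have hih := ih (vu.erase q0) (by
          intro q hq
          have hne : q ≠ q0 := (Finset.mem_erase.mp hq).1
          have := hplace q (Finset.mem_erase.mp hq).2
          rw [List.filter_cons] at this
          have hbe : (q0 == q) = false := by
            simp [Ne.symm hne]
          simpa [hbe] using this)
        rw [← Finset.add_sum_erase vu _ hq0]
        simp only [List.map_cons, List.sum_cons]
        have hmin : (Finset.univ.inf' Finset.univ_nonempty
            (fun i => f_r i * l q0 i)) ≤ f_r i * l q0 i :=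
          Finset.inf'_le _ (Finset.mem_univ i)
        have hp := hmono (SEdge.place q0 i)
        have : f_r i * l q0 i = l q0 i * f_r i := mul_comm _ _
        linarith
      · have hih := ih vu (by
          intro q hq
          have hne : q ≠ q0 := fun h => hq0 (h ▸ hq)
          have := hplace q hq
          rw [List.filter_cons] at this
          have hbe : (q0 == q) = false := by
            simp [Ne.symm hne]
          simpa [hbe] using this)
        simp only [List.map_cons, List.sum_cons]
        have hp := hmono (SEdge.place q0 i)
        have hw : (0:ℝ) ≤ l q0 i * f_r i := mul_nonneg (hl q0 i) (hfr i)
        linarith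
end

section
/- In the reduced scheduling graph, where a start-up edge is allowed only if the most recently provisioned VM is non-empty and placement edges may only assign queries to the most recently provisioned VM, every goal vertex of the full scheduling graph whose schedule contains no empty VM is still reachable from the start vertex. -/
/-- A vertex of the scheduling graph: a partial schedule (list of VMs, most
recently created first, each a typed queue of queries) together with the
multiset of unassigned queries. -/
structure SVertex (Query VMType : Type) where
  vms : List (VMType × List Query)
  unassigned : Multiset Query

/-- One step of the *reduced* scheduling graph: a start-up edge is allowed only
when the most recently provisioned VM (if any) is non-empty, and a placement
edge appends an unassigned query to the queue of the most recently provisioned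
VM. -/
inductive RStep {Query VMType : Type} [DecidableEq Query] :
    SVertex Query VMType → SVertex Query VMType → Prop
  | startup (v : SVertex Query VMType) (i : VMType)
      (h : ∀ hd ∈ v.vms.head?, hd.2 ≠ []) :
      RStep v ⟨(i, []) :: v.vms, v.unassigned⟩
  | place (v : SVertex Query VMType) (q : Query) (hd : VMType × List Query)
      (tl : List (VMType × List Query))
      (hv : v.vms = hd :: tl) (hq : q ∈ v.unassigned) :
      RStep v ⟨(hd.1, hd.2 ++ [q]) :: tl, v.unassigned.erase q⟩

/-- In the reduced scheduling graph, every goal vertex of the full scheduling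
graph (all queries of `Q` assigned, partitioned among the VM queues) whose
schedule contains no empty VM is reachable from the start vertex. -/
theorem stmt3 {Query VMType : Type} [DecidableEq Query]
    (Q : Multiset Query) (g : SVertex Query VMType)
    (hgoal : g.unassigned = 0)
    (hpart : (g.vms.map (fun vm => (vm.2 : Multiset Query))).sum = Q)
    (hnonempty : ∀ vm ∈ g.vms, vm.2 ≠ []) :
    Relation.ReflTransGen RStep ⟨[], Q⟩ g := by
  have fill : ∀ (qs : List Query) (i : VMType) (pre : List Query)
      (tl : List (VMType × List Query)) (u : Multiset Query),
      Relation.ReflTransGen RStep ⟨(i, pre) :: tl, u + ↑qs⟩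
        ⟨(i, pre ++ qs) :: tl, u⟩ := by
    intro qs
    induction qs with
    | nil => intro i pre tl u; simp; exact .refl
    | cons q rest ih =>
      intro i pre tl u
      refine Relation.ReflTransGen.head
        (RStep.place ⟨(i, pre) :: tl, u + ↑(q :: rest)⟩ q (i, pre) tl rfl ?_) ?_
      · simp
      · have herase : (u + ↑(q :: rest) : Multiset Query).erase q = u + ↑rest := by
          have : (↑(q :: rest) : Multiset Query) = q ::ₘ ↑rest := rfl
          rw [this, add_comm u, Multiset.cons_add, Multiset.erase_cons_head, add_comm]
        rw [herase]
        have := ih i (pre ++ [q]) tl u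
        simpa using this
  have main : ∀ (L : List (VMType × List Query)) (u : Multiset Query),
      (∀ vm ∈ L, vm.2 ≠ []) →
      Relation.ReflTransGen RStep ⟨[], u + (L.map (fun vm => (vm.2 : Multiset Query))).sum⟩
        ⟨L, u⟩ := by
    intro L
    induction L with
    | nil => intro u _; simp; exact .refl
    | cons vm tl ih =>
      intro u hne
      have h1 := ih (u + ↑vm.2) (fun x hx => hne x (List.mem_cons_of_mem _ hx))
      have h2 : RStep (⟨tl, u + ↑vm.2⟩ : SVertex Query VMType)
          ⟨(vm.1, []) :: tl, u + ↑vm.2⟩ := by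
        refine RStep.startup ⟨tl, u + ↑vm.2⟩ vm.1 ?_
        intro hd hhd
        exact hne hd (List.mem_cons_of_mem _ (List.mem_of_mem_head? hhd))
      have h3 := fill vm.2 vm.1 [] tl u
      have heq : u + ((vm :: tl).map (fun vm => (vm.2 : Multiset Query))).sum
          = (u + ↑vm.2) + (tl.map (fun vm => (vm.2 : Multiset Query))).sum := by
        simp [add_comm, add_assoc, add_left_comm]
      have h1' : Relation.ReflTransGen RStep
          (⟨[], u + ((vm :: tl).map (fun vm => (vm.2 : Multiset Query))).sum⟩ :
            SVertex Query VMType) ⟨tl, u + ↑vm.2⟩ := by rw [heq]; exact h1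
      exact h1'.trans ((Relation.ReflTransGen.single h2).trans (by simpa using h3))
  have := main g.vms 0 hnonempty
  rw [hpart] at this
  obtain ⟨vms, un⟩ := g
  simp only at hgoal hpart this ⊢
  subst hgoal
  simpa using this
end

section
/- Any vertex in the reduced scheduling graph has at most one empty VM in its partial schedule, and if an empty VM exists it is the most recently created one. -/
lemma filter_le_of_tail {Query VMType : Type}
    (l : List (VMType × List Query)) (h : ∀ vm ∈ l.tail, vm.2 ≠ []) :
    (l.filter (fun vm => vm.2.isEmpty)).length ≤ 1 := by
  cases l with
  | nil => simp
  | cons hd tl =>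
    have : tl.filter (fun vm => vm.2.isEmpty) = [] := by
      rw [List.filter_eq_nil_iff]
      intro a ha
      simpa [List.isEmpty_iff] using h a ha
    by_cases he : hd.2.isEmpty <;> simp [List.filter_cons, he, this]

/-- Any vertex reachable in the reduced scheduling graph has at most one empty
VM in its partial schedule, and if an empty VM exists it is the most recently
created one (every VM other than the head of the list is non-empty). -/
theorem stmt4 {Query VMType : Type} [DecidableEq Query]
    (Q : Multiset Query) (v : SVertex Query VMType)
    (hreach : Relation.ReflTransGen RStep ⟨[], Q⟩ v) :
    (v.vms.filter (fun vm => vm.2.isEmpty)).length ≤ 1 ∧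
      ∀ vm ∈ v.vms.tail, vm.2 ≠ [] := by
  have htail : ∀ vm ∈ v.vms.tail, vm.2 ≠ [] := by
    induction hreach with
    | refl => simp
    | tail hab hbc ih =>
      rename_i b _
      cases hbc with
      | startup i h =>
        intro vm hvm
        simp only [List.tail_cons] at hvm
        cases hb : b.vms with
        | nil => simp [hb] at hvm
        | cons h1 t1 =>
          rw [hb] at hvm
          rcases List.mem_cons.mp hvm with rfl | hmem
          · exact h vm (by simp [hb])
          · exact ih vm (by simp [hb, hmem])
      | place q hd tl hv hq =>
        intro vm hvm
        exact ih vm (by simp [hv]; exact hvm)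
  exact ⟨filter_le_of_tail _ htail, htail⟩
end

section
/- In the reduced scheduling graph, every complete schedule consisting of a sequence of non-empty VMs (each a queue of queries from Q partitioning Q) is reachable by exactly one path from the start vertex. -/
section Aux

variable {Query VMType : Type} [DecidableEq Query]

/-- The (unique) predecessor of a vertex in the reduced graph, as a function. -/
def spred (b : SVertex Query VMType) : Option (SVertex Query VMType) :=
  match b.vms with
  | [] => none
  | (i, l) :: tl =>
    if hl : l = [] then some ⟨tl, b.unassigned⟩
    else some ⟨(i, l.dropLast) :: tl, l.getLast hl ::ₘ b.unassigned⟩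

lemma spred_eq {a b : SVertex Query VMType} (h : RStep a b) : spred b = some a := by
  cases h with
  | startup i hv => simp [spred]
  | place q hd tl hv hq =>
      have hne : hd.2 ++ [q] ≠ [] := by simp
      simp only [spred, hne, dite_false, List.dropLast_concat, List.getLast_append,
        Multiset.cons_erase hq, Option.some.injEq]
      cases a
      simp_all

lemma pred_unique {a a' b : SVertex Query VMType} (h : RStep a b) (h' : RStep a' b) :
    a = a' :=
  Option.some_injective _ ((spred_eq h).symm.trans (spred_eq h'))

lemma no_step_start {a : SVertex Query VMType} {u : Multiset Query} :
    ¬ RStep a ⟨[], u⟩ := fun h => by simpa [spred] using spred_eq h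

lemma rev_unique (s : SVertex Query VMType) (hs : ∀ a, ¬ RStep a s) :
    ∀ (r r' : List (SVertex Query VMType)), List.Chain' (flip RStep) r →
      List.Chain' (flip RStep) r' → r.head? = r'.head? →
      r.getLast? = some s → r'.getLast? = some s → r = r' := by
  intro r
  induction r with
  | nil => intro r' _ _ _ h _; simp at h
  | cons a t ih =>
    intro r' hc hc' hh hl hl'
    cases r' with
    | nil => simp at hl'
    | cons a' t' =>
      simp only [List.head?_cons, Option.some.injEq] at hh
      subst hh
      cases t with
      | nil =>
        cases t' with
        | nil => rfl
        | cons b t'' =>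
          simp only [List.getLast?_singleton, Option.some.injEq] at hl
          subst hl
          simp only [List.Chain'] at hc'; rw [List.isChain_cons_cons] at hc'
          exact absurd hc'.1 (hs b)
      | cons b t'' =>
        cases t' with
        | nil =>
          simp only [List.getLast?_singleton, Option.some.injEq] at hl'
          subst hl'
          simp only [List.Chain'] at hc; rw [List.isChain_cons_cons] at hc
          exact absurd hc.1 (hs b)
        | cons b' t''' =>
          simp only [List.Chain'] at hc hc'; rw [List.isChain_cons_cons] at hc hc'
          have hb : b = b' := pred_unique hc.1 hc'.1
          subst hb
          rw [List.getLast?_cons_cons] at hl hl'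
          have := ih (b :: t''') hc.2 hc'.2 rfl hl hl'
          rw [this]

lemma head?_append_of_some {α : Type*} {p : List α} {x : α} (h : p.head? = some x)
    (l : List α) : (p ++ l).head? = some x := by
  cases p <;> simp_all

/-- measure for the existence induction -/
def smeas (g : SVertex Query VMType) : ℕ :=
  g.vms.length + (g.vms.map (fun vm => vm.2.length)).sum

lemma exists_path (Q : Multiset Query) :
    ∀ (n : ℕ) (g : SVertex Query VMType), smeas g ≤ n →
      (∀ vm ∈ g.vms.tail, vm.2 ≠ []) →
      g.unassigned + (g.vms.map (fun vm => (vm.2 : Multiset Query))).sum = Q →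
      ∃ p : List (SVertex Query VMType),
        List.Chain' RStep p ∧ p.head? = some ⟨[], Q⟩ ∧ p.getLast? = some g := by
  intro n
  induction n with
  | zero =>
    intro g hm _ hsum
    obtain ⟨vms, u⟩ := g
    cases vms with
    | nil =>
      have hu : u = Q := by simpa using hsum
      subst hu
      exact ⟨[⟨[], u⟩], List.isChain_singleton _, rfl, rfl⟩
    | cons hd tl => simp [smeas] at hm
  | succ n ih =>
    intro g hm ht hsum
    obtain ⟨vms, u⟩ := g
    cases vms with
    | nil =>
      have hu : u = Q := by simpa using hsum
      subst hu
      exact ⟨[⟨[], u⟩], List.isChain_singleton _, rfl, rfl⟩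
    | cons hd tl =>
      obtain ⟨i, l⟩ := hd
      have ht' : ∀ vm ∈ tl, vm.2 ≠ [] := by simpa using ht
      rcases List.eq_nil_or_concat l with rfl | ⟨l', q, rfl⟩
      · -- last step was a startup edge
        obtain ⟨p, hp, hph, hpl⟩ := ih ⟨tl, u⟩
          (by simp only [smeas] at hm ⊢; simp at hm ⊢; omega)
          (fun vm hvm => ht' vm (List.mem_of_mem_tail hvm))
          (by simpa using hsum)
        refine ⟨p ++ [⟨(i, []) :: tl, u⟩], ?_, head?_append_of_some hph _,
          List.getLast?_concat⟩
        simp only [List.Chain']; rw [List.isChain_append]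
        refine ⟨hp, List.isChain_singleton _, ?_⟩
        intro x hx y hy
        rw [hpl] at hx
        simp only [Option.mem_def, Option.some.injEq, List.head?_cons] at hx hy
        subst hx; subst hy
        exact RStep.startup ⟨tl, u⟩ i
          (fun hd hhd => ht' hd (List.mem_of_mem_head? hhd))
      · -- last step was a placement edge
        rw [List.concat_eq_append] at hm hsum ⊢
        obtain ⟨p, hp, hph, hpl⟩ := ih ⟨(i, l') :: tl, q ::ₘ u⟩
          (by simp only [smeas, List.length_cons, List.map_cons, List.sum_cons,
                List.length_append, List.length_singleton] at hm ⊢; omega)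
          (by simpa using ht')
          (by
            rw [← hsum]
            have hc : ((l' ++ [q] : List Query) : Multiset Query)
                = q ::ₘ (l' : Multiset Query) := by
              simp
            simp only [List.map_cons, List.sum_cons, hc,
              ← Multiset.singleton_add]
            abel)
        refine ⟨p ++ [⟨(i, l' ++ [q]) :: tl, u⟩], ?_, head?_append_of_some hph _,
          List.getLast?_concat⟩
        simp only [List.Chain']; rw [List.isChain_append]
        refine ⟨hp, List.isChain_singleton _, ?_⟩
        intro x hx y hy
        rw [hpl] at hx
        simp only [Option.mem_def, Option.some.injEq, List.head?_cons] at hx hy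
        subst hx; subst hy
        have hstep := RStep.place ⟨(i, l') :: tl, q ::ₘ u⟩ q (i, l') tl rfl
          (Multiset.mem_cons_self q u)
        simpa [Multiset.erase_cons_head] using hstep

end Aux

/-- In the reduced scheduling graph, every complete schedule consisting of a
sequence of non-empty VMs whose queues partition the workload `Q` is reachable
from the start vertex by exactly one path (represented as the list of vertices
visited, chained by reduced steps). -/
theorem stmt5 {Query VMType : Type} [DecidableEq Query]
    (Q : Multiset Query) (g : SVertex Query VMType)
    (hgoal : g.unassigned = 0)
    (hpart : (g.vms.map (fun vm => (vm.2 : Multiset Query))).sum = Q)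
    (hnonempty : ∀ vm ∈ g.vms, vm.2 ≠ []) :
    ∃! p : List (SVertex Query VMType),
      List.Chain' RStep p ∧ p.head? = some ⟨[], Q⟩ ∧ p.getLast? = some g := by
  obtain ⟨p, hp, hph, hpl⟩ := exists_path Q (smeas g) g le_rfl
    (fun vm h => hnonempty vm (List.mem_of_mem_tail h))
    (by rw [hgoal, hpart, zero_add])
  refine ⟨p, ⟨hp, hph, hpl⟩, ?_⟩
  rintro p' ⟨hp', hph', hpl'⟩
  have h1 : List.Chain' (flip RStep) p'.reverse := by
    simp only [List.Chain']; rw [List.isChain_reverse]; exact hp'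
  have h2 : List.Chain' (flip RStep) p.reverse := by
    simp only [List.Chain']; rw [List.isChain_reverse]; exact hp
  have := rev_unique (⟨[], Q⟩ : SVertex Query VMType) (fun a => no_step_start)
    p'.reverse p.reverse h1 h2
    (by rw [List.head?_reverse, List.head?_reverse, hpl', hpl])
    (by rw [List.getLast?_reverse, hph'])
    (by rw [List.getLast?_reverse, hph])
  exact List.reverse_injective this
end

section
/- If P(R,·) ≥ 0 with P of the empty schedule zero, f^i_s ≥ 0, f^i_r ≥ 0, and latencies l(q,i) ≥ 0, then in the scheduling graph every path weight is nonnegative, and for monotonically increasing goals every individual edge weight is nonnegative. -/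
lemma aux13 {V : Type} (E : V → V → Prop) (w base : V → V → ℝ) (P : V → ℝ)
    (hw : ∀ u v, E u v → w u v = base u v + P v - P u)
    (hbase : ∀ u v, E u v → 0 ≤ base u v)
    (hP : ∀ v, 0 ≤ P v) :
    ∀ (l : List V) (a : V), (a :: l).Chain' E →
      -P a ≤ (((a :: l).zip l).map (fun uv => w uv.1 uv.2)).sum := by
  intro l
  induction l with
  | nil => intro a _; simp [neg_nonpos, hP a]
  | cons b l ih =>
      intro a hc
      rw [List.Chain', List.isChain_cons_cons] at hc
      have hIH := ih b hc.2
      simp only [List.zip_cons_cons, List.map_cons, List.sum_cons]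
      have hwab := hw a b hc.1
      have hb := hbase a b hc.1
      linarith

/-- In the scheduling graph, every edge weight decomposes as a nonnegative
base cost (start-up or processing cost) plus the penalty difference
`P v − P u`.  If `P ≥ 0` and the start vertex carries zero penalty, then every
path from the start vertex has nonnegative total weight; and for monotonically
increasing goals (`P u ≤ P v` along every edge) every individual edge weight
is nonnegative. -/
theorem stmt13 {V : Type} (E : V → V → Prop) (w base : V → V → ℝ) (P : V → ℝ)
    (start : V)
    (hw : ∀ u v, E u v → w u v = base u v + P v - P u)
    (hbase : ∀ u v, E u v → 0 ≤ base u v)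
    (hP : ∀ v, 0 ≤ P v) (hstart : P start = 0) :
    (∀ p : List V, p.Chain' E → p.head? = some start →
        0 ≤ ((p.zip p.tail).map (fun uv => w uv.1 uv.2)).sum) ∧
    ((∀ u v, E u v → P u ≤ P v) → ∀ u v, E u v → 0 ≤ w u v) := by
  constructor
  · intro p hc hh
    cases p with
    | nil => simp at hh
    | cons a l =>
        simp only [List.head?_cons, Option.some.injEq] at hh
        subst hh
        have := aux13 E w base P hw hbase hP l a hc
        simpa [hstart] using this
  · intro hmono u v huv
    have := hw u v huv
    have := hbase u v huv
    have := hmono u v huv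
    linarith
end
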